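/- arXiv:1910.12648 — 4 statements merged into one kernel-verified Lean document; each statement's English description precedes it below -/
import Mathlib

section
/- Every Maya diagram M has a unique representation M = Ξ(B) for a finite set B ⊆ ℤ of odd cardinality 2g+1; that is, there exist unique g ≥ 0 and integers b₀ < b₁ < ⋯ < b_{2g} such that M = {k : k < b₀} ∪ [b₁, b₂) ∪ ⋯ ∪ [b_{2g−1}, b_{2g}), where [m, n) = {j ∈ ℤ : m ≤ j < n}. The number g is called the genus of M and (b₀, …, b_{2g}) its block coordinates. -/
def IsMaya (M : Set ℤ) : Prop :=
  (M ∩ {k : ℤ | 0 ≤ k}).Finite ∧ ({k : ℤ | k < 0} \ M).Finite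

def XiSet (g : ℕ) (b : Fin (2 * g + 1) → ℤ) : Set ℤ :=
  {k : ℤ | k < b ⟨0, by omega⟩} ∪
    ⋃ i : Fin g, Set.Ico (b ⟨2 * i.val + 1, by have := i.isLt; omega⟩)
      (b ⟨2 * i.val + 2, by have := i.isLt; omega⟩)

/-- The set of points where membership in `M` flips. -/
def flipSet (M : Set ℤ) : Set ℤ := {k | ¬ ((k - 1) ∈ M ↔ k ∈ M)}

lemma downclosed_mem {n : ℕ} (T : Finset (Fin n))
    (h : ∀ i i' : Fin n, i' ≤ i → i ∈ T → i' ∈ T) (i : Fin n) :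
    i ∈ T ↔ i.val < T.card := by
  constructor
  · intro hi
    have hsub : Finset.Iic i ⊆ T := fun j hj => h i j (Finset.mem_Iic.1 hj) hi
    have := Finset.card_le_card hsub
    rw [Fin.card_Iic] at this
    omega
  · intro hlt
    by_contra hni
    have hsub : T ⊆ Finset.Iio i := by
      intro j hj
      rw [Finset.mem_Iio]
      rcases lt_or_ge j i with h'|h'
      · exact h'
      · exact absurd (h j i h' hj) hni
    have := Finset.card_le_card hsub
    rw [Fin.card_Iio] at this
    omega

lemma mem_xiSet_iff {g : ℕ} {b : Fin (2 * g + 1) → ℤ} (hb : StrictMono b) (k : ℤ) :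
    k ∈ XiSet g b ↔ Even ((Finset.univ.filter (fun i => b i ≤ k)).card) := by
  classical
  set T := Finset.univ.filter (fun i => b i ≤ k) with hT
  set j := T.card with hj
  have hdc : ∀ i i' : Fin (2 * g + 1), i' ≤ i → i ∈ T → i' ∈ T := by
    intro i i' hle hi
    simp only [hT, Finset.mem_filter, Finset.mem_univ, true_and] at hi ⊢
    exact le_trans (hb.monotone hle) hi
  have hmem : ∀ i : Fin (2 * g + 1), b i ≤ k ↔ i.val < j := by
    intro i
    have := downclosed_mem T hdc i
    simpa [hT, Finset.mem_filter] using this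
  have hjle : j ≤ 2 * g + 1 := by
    calc j ≤ Finset.univ.card := Finset.card_filter_le _ _
    _ = 2 * g + 1 := by simp
  rw [XiSet]
  simp only [Set.mem_union, Set.mem_setOf_eq, Set.mem_iUnion, Set.mem_Ico]
  constructor
  · rintro (h0 | ⟨i, h1, h2⟩)
    · have h0' : ¬ b ⟨0, by omega⟩ ≤ k := not_le.2 h0
      rw [hmem] at h0'
      simp only [not_lt, Nat.le_zero] at h0'
      simp [h0']
    · rw [hmem] at h1
      have h2' : ¬ b ⟨2 * i.val + 2, by have := i.isLt; omega⟩ ≤ k := not_le.2 h2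
      rw [hmem] at h2'
      simp only [not_lt] at h2'
      have : j = 2 * i.val + 2 := by simp at h1 h2' ⊢; omega
      rw [this]
      exact ⟨i.val + 1, by ring⟩
  · intro hEven
    obtain ⟨m, hm⟩ := hEven
    rcases Nat.eq_zero_or_pos m with rfl | hmpos
    · left
      rw [← not_le, hmem]
      omega
    · right
      have hmg : m ≤ g := by omega
      refine ⟨⟨m - 1, by omega⟩, ?_, ?_⟩
      · rw [hmem]; simp; omega
      · rw [← not_le, hmem]; simp; omega

lemma flip_xiSet {g : ℕ} {b : Fin (2 * g + 1) → ℤ} (hb : StrictMono b) :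
    flipSet (XiSet g b) = Set.range b := by
  classical
  ext k
  simp only [flipSet, Set.mem_setOf_eq, Set.mem_range]
  rw [mem_xiSet_iff hb (k - 1), mem_xiSet_iff hb k]
  by_cases hr : ∃ i, b i = k
  · obtain ⟨i₀, hi₀⟩ := hr
    have hsplit : Finset.univ.filter (fun i => b i ≤ k)
        = insert i₀ (Finset.univ.filter (fun i => b i ≤ k - 1)) := by
      ext i
      simp only [Finset.mem_filter, Finset.mem_univ, true_and, Finset.mem_insert]
      constructor
      · intro hik
        rcases eq_or_lt_of_le hik with heq | hlt
        · left; exact hb.injective (by rw [hi₀, heq])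
        · right; omega
      · rintro (rfl | h)
        · omega
        · omega
    have hnotmem : i₀ ∉ Finset.univ.filter (fun i => b i ≤ k - 1) := by
      simp [hi₀]
    rw [hsplit, Finset.card_insert_of_notMem hnotmem]
    simp only [Nat.even_add_one]
    constructor
    · intro _; exact ⟨i₀, hi₀⟩
    · intro _; tauto
  · have hsplit : Finset.univ.filter (fun i => b i ≤ k)
        = Finset.univ.filter (fun i => b i ≤ k - 1) := by
      ext i
      simp only [Finset.mem_filter, Finset.mem_univ, true_and]
      have : b i ≠ k := fun h => hr ⟨i, h⟩
      omega
    rw [hsplit]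
    tauto

lemma mem_iff_even (M : Set ℤ) (F : Finset ℤ) (N' : ℤ)
    (hbase : ∀ k ≤ N', k ∈ M)
    (hF : ∀ x ∈ F, N' < x)
    (hflip : ∀ k : ℤ, k ∈ F ↔ ¬((k - 1) ∈ M ↔ k ∈ M)) :
    ∀ k : ℤ, k ∈ M ↔ Even ((F.filter (· ≤ k)).card) := by
  classical
  have key : ∀ k, N' ≤ k → (k ∈ M ↔ Even ((F.filter (· ≤ k)).card)) := by
    refine Int.le_induction ?_ ?_
    ·
        have he : F.filter (· ≤ N') = ∅ := by
          rw [Finset.filter_eq_empty_iff]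
          intro x hx
          exact not_le.2 (hF x hx)
        simp [he, hbase N' le_rfl]
    · intro k hk ih
      by_cases hkF : (k + 1) ∈ F
      · have hsplit : F.filter (· ≤ k + 1) = insert (k + 1) (F.filter (· ≤ k)) := by
          ext x
          simp only [Finset.mem_filter, Finset.mem_insert]
          constructor
          · rintro ⟨hxF, hx⟩
            rcases eq_or_lt_of_le hx with h | h
            · left; exact h
            · right; exact ⟨hxF, by omega⟩
          · rintro (rfl | ⟨hxF, hx⟩)
            · exact ⟨hkF, le_rfl⟩
            · exact ⟨hxF, by omega⟩
        have hnot : (k + 1) ∉ F.filter (· ≤ k) := by simp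
        rw [hsplit, Finset.card_insert_of_notMem hnot]
        have hm := (hflip (k + 1)).1 hkF
        have hk1 : (k : ℤ) + 1 - 1 = k := by ring
        rw [hk1] at hm
        rw [Nat.even_add_one]
        tauto
      · have hsplit : F.filter (· ≤ k + 1) = F.filter (· ≤ k) := by
          ext x
          simp only [Finset.mem_filter]
          constructor
          · rintro ⟨hxF, hx⟩
            refine ⟨hxF, ?_⟩
            have : x ≠ k + 1 := fun h => hkF (h ▸ hxF)
            omega
          · rintro ⟨hxF, hx⟩
            exact ⟨hxF, by omega⟩
        have hm : ((k + 1 : ℤ) - 1) ∈ M ↔ (k + 1 : ℤ) ∈ M := by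
          by_contra h
          exact hkF ((hflip (k + 1)).2 h)
        have hk1 : (k : ℤ) + 1 - 1 = k := by ring
        rw [hk1] at hm
        rw [hsplit]
        tauto
  intro k
  rcases le_or_gt N' k with h | h
  · exact key k h
  · have he : F.filter (· ≤ k) = ∅ := by
      rw [Finset.filter_eq_empty_iff]
      intro x hx
      have := hF x hx
      omega
    simp [he, hbase k (by omega)]

theorem block_coordinates_exist_unique (M : Set ℤ) (hM : IsMaya M) :
    ∃! gb : (g : ℕ) × (Fin (2 * g + 1) → ℤ),
      StrictMono gb.2 ∧ M = XiSet gb.1 gb.2 := by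
  classical
  -- bounds
  obtain ⟨c, hc⟩ := hM.1.bddAbove
  obtain ⟨c', hc'⟩ := hM.2.bddBelow
  set N : ℤ := max c 0 + 1 with hN
  set N' : ℤ := min c' 0 - 1 with hN'
  have hNout : ∀ k : ℤ, N ≤ k → k ∉ M := by
    intro k hk hkM
    have : k ∈ M ∩ {k : ℤ | 0 ≤ k} := ⟨hkM, by simp; omega⟩
    have := hc this
    omega
  have hbase : ∀ k ≤ N', k ∈ M := by
    intro k hk
    by_contra h
    have : k ∈ {k : ℤ | k < 0} \ M := ⟨by simp; omega, h⟩
    have := hc' this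
    omega
  -- flip set is finite
  have hsub : flipSet M ⊆ Set.Icc (N' + 1) N := by
    intro k hk
    simp only [flipSet, Set.mem_setOf_eq] at hk
    simp only [Set.mem_Icc]
    constructor
    · by_contra h
      exact hk ⟨fun _ => hbase k (by omega), fun _ => hbase (k - 1) (by omega)⟩
    · by_contra h
      exact hk ⟨fun h1 => absurd h1 (hNout (k - 1) (by omega)),
        fun h1 => absurd h1 (hNout k (by omega))⟩
  have hfin : (flipSet M).Finite := (Set.finite_Icc _ _).subset hsub
  set F : Finset ℤ := hfin.toFinset with hF
  have hflip : ∀ k : ℤ, k ∈ F ↔ ¬((k - 1) ∈ M ↔ k ∈ M) := by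
    intro k
    rw [hF, Set.Finite.mem_toFinset]
    rfl
  have hFgt : ∀ x ∈ F, N' < x := by
    intro x hx
    rw [hF, Set.Finite.mem_toFinset] at hx
    have := hsub hx
    simp only [Set.mem_Icc] at this
    omega
  have hFle : ∀ x ∈ F, x ≤ N := by
    intro x hx
    rw [hF, Set.Finite.mem_toFinset] at hx
    have := hsub hx
    simp only [Set.mem_Icc] at this
    omega
  have hparity := mem_iff_even M F N' hbase hFgt hflip
  -- odd total card
  have hodd : Odd F.card := by
    have h1 := hparity N
    have h2 : F.filter (· ≤ N) = F := by
      rw [Finset.filter_eq_self]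
      exact hFle
    rw [h2] at h1
    have : N ∉ M := hNout N le_rfl
    rw [← Nat.not_even_iff_odd]
    tauto
  obtain ⟨g, hg⟩ := hodd
  have hcard : F.card = 2 * g + 1 := hg
  set b : Fin (2 * g + 1) → ℤ := fun i => F.orderEmbOfFin hcard i with hb
  have hbmono : StrictMono b := (F.orderEmbOfFin hcard).strictMono
  -- card equality
  have hcardeq : ∀ k : ℤ,
      (F.filter (· ≤ k)).card = (Finset.univ.filter (fun i => b i ≤ k)).card := by
    intro k
    have himg : F.filter (· ≤ k) = (Finset.univ.filter (fun i => b i ≤ k)).image b := by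
      ext x
      simp only [Finset.mem_filter, Finset.mem_image, Finset.mem_univ, true_and]
      constructor
      · rintro ⟨hxF, hx⟩
        have : x ∈ Set.range b := by
          rw [hb]
          rw [show (fun i => (F.orderEmbOfFin hcard) i) = ⇑(F.orderEmbOfFin hcard) from rfl]
          rw [Finset.range_orderEmbOfFin]
          exact hxF
        obtain ⟨i, hi⟩ := this
        exact ⟨i, hi ▸ hx, hi⟩
      · rintro ⟨i, hik, rfl⟩
        exact ⟨Finset.orderEmbOfFin_mem F hcard i, hik⟩
    rw [himg, Finset.card_image_of_injective _ hbmono.injective]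
  have hMeq : M = XiSet g b := by
    ext k
    rw [hparity k, mem_xiSet_iff hbmono k, hcardeq k]
  refine ⟨⟨g, b⟩, ⟨hbmono, hMeq⟩, ?_⟩
  rintro ⟨g', b'⟩ ⟨hb', hMeq'⟩
  -- ranges equal
  have hrange : Set.range b' = Set.range b := by
    rw [← flip_xiSet hb', ← flip_xiSet hbmono, ← hMeq, ← hMeq']
  have himg : Finset.univ.image b' = Finset.univ.image b := by
    apply Finset.coe_injective
    simp only [Finset.coe_image, Finset.coe_univ, Set.image_univ]
    exact hrange
  have hcb : (Finset.univ.image b).card = 2 * g + 1 := by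
    rw [Finset.card_image_of_injective _ hbmono.injective, Finset.card_univ,
      Fintype.card_fin]
  have hcb' : (Finset.univ.image b').card = 2 * g' + 1 := by
    rw [Finset.card_image_of_injective _ hb'.injective, Finset.card_univ,
      Fintype.card_fin]
  have hgg : g' = g := by
    rw [himg, hcb] at hcb'
    omega
  subst hgg
  have hb'eq : b' = b := by
    have h1 : b' = (Finset.univ.image b).orderEmbOfFin hcb := by
      apply Finset.orderEmbOfFin_unique hcb _ hb'
      intro x
      rw [← himg]
      exact Finset.mem_image_of_mem b' (Finset.mem_univ x)
    have h2 : b = (Finset.univ.image b).orderEmbOfFin hcb := by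
      apply Finset.orderEmbOfFin_unique hcb _ hbmono
      intro x
      exact Finset.mem_image_of_mem b (Finset.mem_univ x)
    exact h1.trans h2.symm
  simp [hb'eq]
end

section
/- For a Maya diagram M, the boundary set B(M) = {b ∈ ℤ : exactly one of b ∈ M and b−1 ∈ M holds} is finite of odd cardinality, it satisfies f_{B(M)}(M) = M + 1, and it is the unique finite set B ⊆ ℤ such that f_B(M) = M + 1; moreover B(M) coincides with the set of block coordinates of M. -/
/-- The translate `M + n = {m + n : m ∈ M}`. -/
def mTranslate (M : Set ℤ) (n : ℤ) : Set ℤ := (fun m => m + n) '' M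

/-- The boundary set of `M`: positions `b` such that exactly one of
`b ∈ M`, `b - 1 ∈ M` holds. -/
def mBoundary (M : Set ℤ) : Set ℤ := {b : ℤ | Xor' (b ∈ M) (b - 1 ∈ M)}

lemma maya_mem_trans {M : Set ℤ} {x : ℤ} : x ∈ mTranslate M 1 ↔ x - 1 ∈ M := by
  simp [mTranslate, sub_eq_add_neg]

lemma maya_sdiff_eq (M : Set ℤ) : symmDiff M (mBoundary M) = mTranslate M 1 := by
  ext x
  rw [Set.mem_symmDiff, maya_mem_trans]
  simp only [mBoundary, Set.mem_setOf_eq, Xor', xor_def]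
  tauto

lemma maya_uniq (M : Set ℤ) (B : Set ℤ) (h : symmDiff M B = mTranslate M 1) :
    B = mBoundary M := by
  ext x
  have := Set.ext_iff.mp h x
  rw [Set.mem_symmDiff, maya_mem_trans] at this
  simp only [mBoundary, Set.mem_setOf_eq, Xor', xor_def]
  tauto

lemma maya_bounds (M : Set ℤ) (hM : IsMaya M) :
    ∃ a c : ℤ, a < c ∧ (∀ k ≤ a, k ∈ M) ∧ (∀ k, c ≤ k → k ∉ M) := by
  obtain ⟨h1, h2⟩ := hM
  obtain ⟨a0, ha0⟩ := h2.bddBelow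
  obtain ⟨c0, hc0⟩ := h1.bddAbove
  refine ⟨min a0 0 - 1, max c0 0 + 1, by omega, ?_, ?_⟩
  · intro k hk
    by_contra hkM
    have : k ∈ {k : ℤ | k < 0} \ M := ⟨by simp; omega, hkM⟩
    have := ha0 this
    omega
  · intro k hk hkM
    have : k ∈ M ∩ {k : ℤ | 0 ≤ k} := ⟨hkM, by simp; omega⟩
    have := hc0 this
    omega

open Classical in
lemma maya_parity (f : ℤ → Prop) (a : ℤ) : ∀ n : ℕ,
    (Odd ((Finset.Ioc a (a + n)).filter (fun x => Xor' (f x) (f (x - 1)))).card ↔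
      Xor' (f (a + n)) (f a))
  | 0 => by
    simp [Xor']
  | (n + 1) => by
    have ih := maya_parity f a n
    have hcast : ((n + 1 : ℕ) : ℤ) = (n : ℤ) + 1 := by push_cast; ring
    rw [hcast]
    have hins : Finset.Ioc a (a + (n + 1) : ℤ) = insert (a + n + 1) (Finset.Ioc a (a + n)) := by
      ext x
      simp only [Finset.mem_Ioc, Finset.mem_insert]
      omega
    have hnot : (a + n + 1 : ℤ) ∉ Finset.Ioc a (a + (n : ℤ)) := by
      simp [Finset.mem_Ioc]
    rw [hins, Finset.filter_insert]
    have he : (a + (n + 1) : ℤ) = a + n + 1 := by ring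
    rw [he]
    have he2 : (a + n + 1 - 1 : ℤ) = a + n := by ring
    by_cases hx : Xor' (f (a + n + 1)) (f (a + n + 1 - 1))
    · rw [if_pos hx, Finset.card_insert_of_notMem (by simpa using hnot)]
      rw [Nat.odd_add_one, Nat.not_odd_iff_even, ← Nat.not_odd_iff_even, ih]
      rw [he2] at hx
      simp only [Xor', xor_def] at hx ⊢
      tauto
    · rw [if_neg hx, ih]
      rw [he2] at hx
      simp only [Xor', xor_def] at hx ⊢
      tauto

open Classical in
lemma maya_fin_odd (M : Set ℤ) (hM : IsMaya M) :
    (mBoundary M).Finite ∧ Odd (mBoundary M).ncard := by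
  obtain ⟨a, c, hac, ha, hc⟩ := maya_bounds M hM
  have key : mBoundary M =
      ((Finset.Ioc a c).filter (fun x => Xor' (x ∈ M) (x - 1 ∈ M)) : Finset ℤ) := by
    ext x
    simp only [mBoundary, Set.mem_setOf_eq, Finset.coe_filter, Finset.mem_Ioc]
    constructor
    · intro hx
      refine ⟨⟨?_, ?_⟩, hx⟩
      · by_contra h
        push_neg at h
        exact hx.elim (fun ⟨_, h2⟩ => h2 (ha _ (by omega)))
          (fun ⟨_, h2⟩ => h2 (ha _ (by omega)))
      · by_contra h
        push_neg at h
        exact hx.elim (fun ⟨h1, _⟩ => hc _ (by omega) h1)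
          (fun ⟨h1, _⟩ => hc _ (by omega) h1)
    · exact fun h => h.2
  constructor
  · rw [key]; exact (Finset.filter _ _).finite_toSet
  · rw [key, Set.ncard_coe_finset]
    obtain ⟨n, hn⟩ : ∃ n : ℕ, c = a + n := ⟨(c - a).toNat, by omega⟩
    subst hn
    rw [show ((Finset.Ioc a (a+n)).filter (fun x => Xor' (x ∈ M) (x - 1 ∈ M)))
      = ((Finset.Ioc a (a+n)).filter (fun x => Xor' ((· ∈ M) x) ((· ∈ M) (x - 1)))) by rfl]
    rw [maya_parity (· ∈ M) a n]
    exact Or.inr ⟨ha a le_rfl, hc _ le_rfl⟩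

section Xi
variable {g : ℕ} {b : Fin (2 * g + 1) → ℤ} (hb : StrictMono b)

lemma mem_Xi (k : ℤ) : k ∈ XiSet g b ↔
    (k < b ⟨0, by omega⟩ ∨ ∃ i : Fin g, b ⟨2 * i.val + 1, by have := i.isLt; omega⟩ ≤ k ∧
      k < b ⟨2 * i.val + 2, by have := i.isLt; omega⟩) := by
  simp [XiSet, Set.mem_iUnion, Set.mem_Ico]

include hb in
lemma Xi_interval_mem (j : ℕ) (hj : j < 2 * g) (y : ℤ)
    (h1 : b ⟨j, by omega⟩ ≤ y) (h2 : y < b ⟨j + 1, by omega⟩) :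
    y ∈ XiSet g b ↔ Odd j := by
  rw [mem_Xi]
  constructor
  · rintro (h | ⟨i, hi1, hi2⟩)
    · exfalso
      have : b ⟨0, by omega⟩ ≤ b ⟨j, by omega⟩ := hb.monotone (by simp [Fin.mk_le_mk])
      omega
    · have e1 : b ⟨2 * i.val + 1, by have := i.isLt; omega⟩ < b ⟨j + 1, by omega⟩ := by omega
      have e2 : b ⟨j, by omega⟩ < b ⟨2 * i.val + 2, by have := i.isLt; omega⟩ := by omega
      rw [hb.lt_iff_lt, Fin.mk_lt_mk] at e1 e2
      exact ⟨i.val, by omega⟩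
  · rintro ⟨m, rfl⟩
    exact Or.inr ⟨⟨m, by omega⟩, h1, h2⟩

include hb in
lemma Xi_top_not_mem (y : ℤ) (h : b ⟨2 * g, by omega⟩ ≤ y) : y ∉ XiSet g b := by
  rw [mem_Xi]
  push_neg
  constructor
  · have : b ⟨0, by omega⟩ ≤ b ⟨2 * g, by omega⟩ := hb.monotone (by simp [Fin.mk_le_mk])
    omega
  · intro i hi
    have : b ⟨2 * i.val + 2, by have := i.isLt; omega⟩ ≤ b ⟨2 * g, by omega⟩ :=
      hb.monotone (by simp [Fin.mk_le_mk]; have := i.isLt; omega)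
    omega

include hb in
lemma Xi_mem_iff_odd (j : ℕ) (hj : j ≤ 2 * g) :
    b ⟨j, by omega⟩ ∈ XiSet g b ↔ Odd j := by
  rcases lt_or_eq_of_le hj with h | h
  · exact Xi_interval_mem hb j h _ le_rfl (hb (by rw [Fin.mk_lt_mk]; omega))
  · subst h
    constructor
    · intro hmem
      exact absurd hmem (Xi_top_not_mem hb _ le_rfl)
    · intro hodd
      exact absurd hodd (by rw [Nat.odd_iff]; omega)

include hb in
lemma Xi_bdry (j : ℕ) (hj : j < 2 * g + 1) :
    Xor' (b ⟨j, hj⟩ ∈ XiSet g b) (b ⟨j, hj⟩ - 1 ∈ XiSet g b) := by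
  have h1 : b ⟨j, hj⟩ ∈ XiSet g b ↔ Odd j := Xi_mem_iff_odd hb j (by omega)
  rcases Nat.eq_zero_or_pos j with h0 | h0
  · subst h0
    have h2 : b ⟨0, hj⟩ - 1 ∈ XiSet g b := (mem_Xi _).mpr (Or.inl (by omega))
    exact Or.inr ⟨h2, by rw [h1]; simp [Nat.odd_iff]⟩
  · have hlt : b ⟨j - 1, by omega⟩ < b ⟨j, hj⟩ := hb (Fin.mk_lt_mk.mpr (by omega))
    have hidx : (⟨j - 1 + 1, by omega⟩ : Fin (2 * g + 1)) = ⟨j, hj⟩ :=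
      Fin.mk_eq_mk.mpr (by omega)
    have h2 : b ⟨j, hj⟩ - 1 ∈ XiSet g b ↔ Odd (j - 1) := by
      refine Xi_interval_mem hb (j - 1) (by omega) _ (by omega) ?_
      rw [hidx]; omega
    rw [Xor', xor_def, h1, h2, Nat.odd_iff, Nat.odd_iff]
    omega

include hb in
lemma boundary_Xi : mBoundary (XiSet g b) = Set.range b := by
  ext x
  simp only [mBoundary, Set.mem_setOf_eq, Set.mem_range]
  constructor
  · intro hx
    by_contra hr
    push_neg at hr
    rcases lt_trichotomy x (b ⟨0, by omega⟩) with hlt | heq | hgt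
    · have m1 : x ∈ XiSet g b := (mem_Xi x).mpr (Or.inl hlt)
      have m2 : x - 1 ∈ XiSet g b := (mem_Xi _).mpr (Or.inl (by omega))
      rw [Xor', xor_def] at hx; tauto
    · exact hr _ heq.symm
    · rcases lt_trichotomy x (b ⟨2 * g, by omega⟩) with h2 | h2 | h2
      · -- middle case: find the greatest j with b j < x
        have hS : (Finset.univ.filter (fun j : Fin (2 * g + 1) => b j < x)).Nonempty :=
          ⟨⟨0, by omega⟩, by simpa using hgt⟩
        obtain ⟨j0, hj0mem, hj0max⟩ :
            ∃ j0 ∈ Finset.univ.filter (fun j : Fin (2 * g + 1) => b j < x),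
              ∀ j' ∈ Finset.univ.filter (fun j : Fin (2 * g + 1) => b j < x), j' ≤ j0 :=
          ⟨_, Finset.max'_mem _ hS, fun j' hj' => Finset.le_max' _ _ hj'⟩
        simp only [Finset.mem_filter, Finset.mem_univ, true_and] at hj0mem hj0max
        have hj0lt : j0.val < 2 * g := by
          rcases lt_or_eq_of_le (show j0.val ≤ 2 * g by omega) with h | h
          · exact h
          · exfalso
            have hj0e : j0 = ⟨2 * g, by omega⟩ := Fin.ext h
            rw [hj0e] at hj0mem
            omega
        have hnext : ¬ b ⟨j0.val + 1, by omega⟩ < x := by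
          intro hmem
          have := hj0max _ hmem
          rw [Fin.le_def] at this
          simp at this
        have hbj1 : x < b ⟨j0.val + 1, by omega⟩ := by
          have hne : b ⟨j0.val + 1, by omega⟩ ≠ x := hr _
          omega
        have hbj0 : b ⟨j0.val, by omega⟩ < x := hj0mem
        have m1 := Xi_interval_mem hb j0.val hj0lt x (by omega) hbj1
        have m2 := Xi_interval_mem hb j0.val hj0lt (x - 1) (by omega) (by omega)
        rw [Xor', xor_def] at hx; tauto
      · exact hr _ h2.symm
      · have m1 : x ∉ XiSet g b := Xi_top_not_mem hb _ (by omega)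
        have m2 : x - 1 ∉ XiSet g b := Xi_top_not_mem hb _ (by omega)
        rw [Xor', xor_def] at hx; tauto
  · rintro ⟨j, rfl⟩
    have := Xi_bdry hb j.val j.isLt
    simpa using this
end Xi

theorem boundary_flips_to_translate (M : Set ℤ) (hM : IsMaya M) :
    (mBoundary M).Finite ∧ Odd (mBoundary M).ncard ∧
    symmDiff M (mBoundary M) = mTranslate M 1 ∧
    (∀ B : Set ℤ, B.Finite → symmDiff M B = mTranslate M 1 → B = mBoundary M) ∧
    (∀ (g : ℕ) (b : Fin (2 * g + 1) → ℤ), StrictMono b → M = XiSet g b →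
      mBoundary M = Set.range b) := by
  obtain ⟨hfin, hodd⟩ := maya_fin_odd M hM
  refine ⟨hfin, hodd, maya_sdiff_eq M, fun B _ h => maya_uniq M B h, ?_⟩
  rintro g b hb rfl
  exact boundary_Xi hb
end

section
/- Let M be a Maya diagram, n ≥ 1, and for 0 ≤ i ≤ n−1 let M_i = {m ∈ ℤ : m·n + i ∈ M} and let B_i be the boundary set of M_i. Then the sets n·B_i + i = {n·b + i : b ∈ B_i} for i = 0, …, n−1 are pairwise disjoint, and their union equals the symmetric difference (M + n) Δ M; equivalently, B = ⋃_{i=0}^{n−1} (n·B_i + i) is the unique finite set with f_B(M) = M + n. -/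
/-- The `i`-th modular section `M_i = {m : m·n + i ∈ M}` of `M`. -/
def mSect (M : Set ℤ) (n i : ℕ) : Set ℤ := {m : ℤ | m * (n : ℤ) + (i : ℤ) ∈ M}

/-- The rescaled boundary set `n·B(M_i) + i = {n·b + i : b ∈ B(M_i)}`. -/
def scaledBoundary (M : Set ℤ) (n i : ℕ) : Set ℤ :=
  (fun b => (n : ℤ) * b + (i : ℤ)) '' mBoundary (mSect M n i)

lemma mem_scaledBoundary_iff (M : Set ℤ) (n i : ℕ) (hn : 1 ≤ n) (hi : i < n) (x : ℤ) :
    x ∈ scaledBoundary M n i ↔ x % (n : ℤ) = (i : ℤ) ∧ Xor' (x ∈ M) (x - n ∈ M) := by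
  constructor
  · rintro ⟨b, hb, rfl⟩
    have hmod : ((n : ℤ) * b + (i : ℤ)) % n = i := by
      rw [add_comm, Int.add_mul_emod_self_left]
      exact Int.emod_eq_of_lt (by positivity) (by exact_mod_cast hi)
    refine ⟨hmod, ?_⟩
    have hb' : Xor' (b * (n : ℤ) + i ∈ M) ((b - 1) * (n : ℤ) + i ∈ M) := hb
    have e1 : b * (n : ℤ) + i = (n : ℤ) * b + i := by ring
    have e2 : (b - 1) * (n : ℤ) + i = (n : ℤ) * b + i - n := by ring
    rwa [e1, e2] at hb'
  · rintro ⟨hmod, hx⟩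
    refine ⟨x / n, ?_, ?_⟩
    · have e1 : (x / (n : ℤ)) * n + i = x := by
        rw [mul_comm (x / (n : ℤ)) (n : ℤ)]
        have := Int.mul_ediv_add_emod x n
        omega
      have e2 : (x / (n : ℤ) - 1) * n + i = x - n := by
        rw [sub_mul, one_mul, mul_comm (x / (n : ℤ)) (n : ℤ)]
        have := Int.mul_ediv_add_emod x n
        omega
      show Xor' ((x / (n:ℤ)) * n + i ∈ M) ((x / (n:ℤ) - 1) * n + i ∈ M)
      rwa [e1, e2]
    · show (n : ℤ) * (x / n) + i = x
      have := Int.mul_ediv_add_emod x n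
      omega

lemma mem_mTranslate_iff (M : Set ℤ) (n x : ℤ) :
    x ∈ mTranslate M n ↔ x - n ∈ M := by
  constructor
  · rintro ⟨m, hm, rfl⟩; simpa using hm
  · intro h; exact ⟨x - n, h, by ring⟩

theorem translate_flip_decomposition (M : Set ℤ) (n : ℕ) (hM : IsMaya M)
    (hn : 1 ≤ n) :
    (∀ i j : ℕ, i < n → j < n → i ≠ j →
      Disjoint (scaledBoundary M n i) (scaledBoundary M n j)) ∧
    (⋃ i ∈ Finset.range n, scaledBoundary M n i) =
      symmDiff (mTranslate M (n : ℤ)) M ∧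
    (∀ B : Set ℤ, B.Finite → symmDiff M B = mTranslate M (n : ℤ) →
      B = ⋃ i ∈ Finset.range n, scaledBoundary M n i) := by
  have hunion : (⋃ i ∈ Finset.range n, scaledBoundary M n i) =
      symmDiff (mTranslate M (n : ℤ)) M := by
    ext x
    simp only [Set.mem_iUnion, Finset.mem_range, Set.mem_symmDiff, mem_mTranslate_iff]
    constructor
    · rintro ⟨i, hi, hx⟩
      have h := ((mem_scaledBoundary_iff M n i hn hi x).1 hx).2
      rcases h with ⟨h1, h2⟩ | ⟨h1, h2⟩
      · exact Or.inr ⟨h1, h2⟩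
      · exact Or.inl ⟨h1, h2⟩
    · intro h
      have hnpos : (0 : ℤ) < n := by exact_mod_cast hn
      refine ⟨(x % (n : ℤ)).toNat, ?_, ?_⟩
      · have := Int.emod_lt_of_pos x hnpos
        have := Int.emod_nonneg x (by omega : (n : ℤ) ≠ 0)
        omega
      · rw [mem_scaledBoundary_iff M n _ hn (by
          have := Int.emod_lt_of_pos x hnpos
          have := Int.emod_nonneg x (by omega : (n : ℤ) ≠ 0)
          omega) x]
        have := Int.emod_nonneg x (by omega : (n : ℤ) ≠ 0)
        refine ⟨by omega, ?_⟩
        rcases h with ⟨h1, h2⟩ | ⟨h1, h2⟩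
        · exact Or.inr ⟨h1, h2⟩
        · exact Or.inl ⟨h1, h2⟩
  refine ⟨?_, hunion, ?_⟩
  · intro i j hi hj hij
    rw [Set.disjoint_left]
    intro x hx hx'
    have h1 := ((mem_scaledBoundary_iff M n i hn hi x).1 hx).1
    have h2 := ((mem_scaledBoundary_iff M n j hn hj x).1 hx').1
    exact hij (by omega)
  · intro B _ hB
    have : B = symmDiff M (mTranslate M (n : ℤ)) := by
      rw [← hB, symmDiff_symmDiff_cancel_left]
    rw [this, symmDiff_comm, hunion]
end

section
/- For every natural number n, the function ψ_n(x) = e^{−x²/2} H_n(x), where H_n is the n-th physicists' Hermite polynomial defined by the Rodrigues formula H_n(x) = (−1)ⁿ e^{x²} (dⁿ/dxⁿ)[e^{−x²}], satisfies the harmonic oscillator equation −ψ_n''(x) + x² ψ_n(x) = (2n+1) ψ_n(x) for all real x. -/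
/-- The `n`-th physicists' Hermite polynomial via the Rodrigues formula
`H_n(x) = (−1)ⁿ e^{x²} (dⁿ/dxⁿ)[e^{−x²}](x)`. -/
noncomputable def physHermite (n : ℕ) (x : ℝ) : ℝ :=
  (-1 : ℝ) ^ n * Real.exp (x ^ 2) *
    iteratedDeriv n (fun t : ℝ => Real.exp (-t ^ 2)) x

/-- The oscillator eigenfunction `ψ_n(x) = e^{−x²/2} H_n(x)`. -/
noncomputable def oscEigenfun (n : ℕ) (x : ℝ) : ℝ :=
  Real.exp (-x ^ 2 / 2) * physHermite n x

open Polynomial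

noncomputable def HQ : ℕ → Polynomial ℝ
  | 0 => 1
  | n+1 => 2 * X * HQ n - derivative (HQ n)

lemma HQ_succ (n : ℕ) : HQ (n+1) = 2 * X * HQ n - derivative (HQ n) := rfl

lemma HQ_deriv (n : ℕ) : derivative (HQ (n+1)) = C (2*(n+1) : ℝ) * HQ n := by
  induction n with
  | zero =>
      rw [HQ_succ]
      show derivative (2 * X * 1 - derivative 1) = C (2*((0:ℕ)+1) : ℝ) * 1
      simp only [mul_one, derivative_one, sub_zero, derivative_mul, derivative_X,
        Nat.cast_zero, zero_add, mul_one]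
      simp only [map_mul, map_one, map_ofNat]
      simp
  | succ n ih =>
      rw [HQ_succ, derivative_sub, derivative_mul, ih]
      rw [HQ_succ n]
      simp only [map_mul, map_add, map_one, map_ofNat, Polynomial.C_eq_natCast,
        derivative_mul, derivative_X, derivative_ofNat, derivative_C, derivative_natCast,
        derivative_one, Nat.cast_add, Nat.cast_one]
      ring

lemma HQ_ode (n : ℕ) :
    derivative (derivative (HQ n)) - 2 * X * derivative (HQ n) + C (2*n : ℝ) * HQ n = 0 := by
  cases n with
  | zero => simp [HQ]
  | succ n =>
      rw [HQ_deriv, derivative_mul, derivative_C, HQ_succ]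
      simp only [map_mul, map_add, map_one, map_ofNat, Polynomial.C_eq_natCast,
        Nat.cast_add, Nat.cast_one]
      ring

lemma hasDerivAt_polygauss (p : Polynomial ℝ) (x : ℝ) :
    HasDerivAt (fun x : ℝ => p.eval x * Real.exp (-x ^ 2))
      ((p.derivative.eval x - 2 * x * p.eval x) * Real.exp (-x ^ 2)) x := by
  have h2 : HasDerivAt (fun x : ℝ => Real.exp (-x ^ 2)) (-(2 * x) * Real.exp (-x ^ 2)) x := by
    have h : HasDerivAt (fun x : ℝ => -x ^ 2) (-(2 * x)) x := by
      simpa using (hasDerivAt_pow 2 x).fun_neg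
    simpa [mul_comm] using h.exp
  have := (p.hasDerivAt x).fun_mul h2
  refine this.congr_deriv ?_
  ring

lemma gauss_eq (n : ℕ) :
    iteratedDeriv n (fun t : ℝ => Real.exp (-t ^ 2)) =
      fun x => (-1 : ℝ) ^ n * ((HQ n).eval x * Real.exp (-x ^ 2)) := by
  induction n with
  | zero => funext x; simp [HQ]
  | succ n ih =>
      funext x
      rw [iteratedDeriv_succ, ih]
      have h := ((hasDerivAt_polygauss (HQ n) x).const_mul ((-1 : ℝ) ^ n)).deriv
      rw [h, HQ_succ]
      simp only [eval_sub, eval_mul, eval_X, eval_ofNat, pow_succ]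
      ring

lemma physHermite_eq (n : ℕ) (x : ℝ) : physHermite n x = (HQ n).eval x := by
  have h1 : ((-1 : ℝ)) ^ n * (-1) ^ n = 1 := by
    rw [← pow_add]; exact Even.neg_one_pow ⟨n, rfl⟩
  have h2 : Real.exp (x ^ 2) * Real.exp (-x ^ 2) = 1 := by
    rw [← Real.exp_add]; simp
  unfold physHermite
  rw [gauss_eq]
  calc (-1 : ℝ) ^ n * Real.exp (x ^ 2) * ((-1) ^ n * ((HQ n).eval x * Real.exp (-x ^ 2)))
      = ((-1) ^ n * (-1) ^ n) * (Real.exp (x ^ 2) * Real.exp (-x ^ 2)) * (HQ n).eval x := by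
        ring
    _ = (HQ n).eval x := by rw [h1, h2]; ring

lemma osc_eq (n : ℕ) :
    oscEigenfun n = fun x => Real.exp (-x ^ 2 / 2) * (HQ n).eval x :=
  funext fun x => by rw [oscEigenfun, physHermite_eq]

lemma hasDerivAt_osc (p : Polynomial ℝ) (x : ℝ) :
    HasDerivAt (fun x : ℝ => Real.exp (-x ^ 2 / 2) * p.eval x)
      (Real.exp (-x ^ 2 / 2) * ((derivative p - X * p).eval x)) x := by
  have hg : HasDerivAt (fun x : ℝ => Real.exp (-x ^ 2 / 2)) (-x * Real.exp (-x ^ 2 / 2)) x := by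
    have h : HasDerivAt (fun x : ℝ => -x ^ 2 / 2) (-x) x := by
      have h2 := ((hasDerivAt_pow 2 x).fun_neg).div_const 2
      refine h2.congr_deriv ?_
      push_cast
      ring
    simpa [mul_comm] using h.exp
  have := hg.fun_mul (p.hasDerivAt x)
  refine this.congr_deriv ?_
  simp only [eval_sub, eval_mul, eval_X]
  ring

lemma deriv_osc (p : Polynomial ℝ) :
    deriv (fun x : ℝ => Real.exp (-x ^ 2 / 2) * p.eval x) =
      fun x => Real.exp (-x ^ 2 / 2) * ((derivative p - X * p).eval x) :=
  funext fun x => (hasDerivAt_osc p x).deriv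

theorem hermite_oscillator_equation (n : ℕ) (x : ℝ) :
    -iteratedDeriv 2 (oscEigenfun n) x + x ^ 2 * oscEigenfun n x =
      (2 * (n : ℝ) + 1) * oscEigenfun n x := by
  rw [osc_eq n]
  rw [show (2 : ℕ) = 1 + 1 from rfl, iteratedDeriv_succ, iteratedDeriv_one]
  rw [deriv_osc, deriv_osc]
  have hode := congrArg (eval x) (HQ_ode n)
  simp only [eval_add, eval_sub, eval_mul, eval_X, eval_C, eval_ofNat, eval_zero] at hode
  simp only [derivative_sub, derivative_mul, derivative_X, eval_sub, eval_add, eval_mul,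
    eval_X, eval_one, one_mul]
  linear_combination (-Real.exp (-x ^ 2 / 2)) * hode
end
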